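/- There exists an absolute constant C > 0 such that for every f in the Zygmund class Λ_*, every x ∈ ℝ and all h′ > h > 0, one has |Δ₂f(x,h′) − Δ₂f(x,h)| ≤ C ‖f‖_* ((h′−h)/h′)(1 + log(h′/(h′−h))). -/

import Mathlib

noncomputable section
open MeasureTheory
open scoped ENNReal NNReal

/-- Second divided difference `Δ₂f(x,h) = (f(x+h) - 2f(x) + f(x-h))/h`. -/
def delta2 (f : ℝ → ℝ) (x h : ℝ) : ℝ := (f (x + h) - 2 * f x + f (x - h)) / h

/-- `M` is a bound for the Zygmund seminorm of `f`. -/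
def ZygBound (f : ℝ → ℝ) (M : ℝ) : Prop := ∀ x h : ℝ, 0 < h → |delta2 f x h| ≤ M

/-- `f` belongs to the Zygmund class `Λ_*`. -/
def MemZygmund (f : ℝ → ℝ) : Prop := Continuous f ∧ ∃ M, ZygBound f M

/-- The Zygmund seminorm `‖f‖_* = sup_{x, h>0} |Δ₂f(x,h)|`. -/
def zygNorm (f : ℝ → ℝ) : ℝ := sInf {M | 0 ≤ M ∧ ZygBound f M}

/-- Average of `g` over the interval `(a,b)`. -/
def intervalAvg (g : ℝ → ℝ) (a b : ℝ) : ℝ := (b - a)⁻¹ * ∫ t in a..b, g t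

/-- `M` bounds the mean oscillation of `g` over all finite intervals. -/
def BMOBound (g : ℝ → ℝ) (M : ℝ) : Prop := ∀ a b : ℝ, a < b →
  (∫⁻ x in Set.Ioo a b, ENNReal.ofReal ((g x - intervalAvg g a b)^2))
    ≤ ENNReal.ofReal (M^2 * (b - a))

/-- `g` has bounded mean oscillation. -/
def MemBMO (g : ℝ → ℝ) : Prop := LocallyIntegrable g volume ∧ ∃ M, BMOBound g M

/-- `f ∈ I(BMO)`: `f` is continuous and its distributional derivative is a BMO
function, i.e. `f` is a primitive of a BMO function. -/
def MemIBMO (f : ℝ → ℝ) : Prop := Continuous f ∧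
  ∃ g : ℝ → ℝ, MemBMO g ∧ ∀ x, f x = f 0 + ∫ t in (0:ℝ)..x, g t

/-- The set `A(f,ε) = {(x,h) : h > 0, |Δ₂f(x,h)| > ε}` in the upper half-plane. -/
def Aset (f : ℝ → ℝ) (ε : ℝ) : Set (ℝ × ℝ) := {p | 0 < p.2 ∧ ε < |delta2 f p.1 p.2|}

/-- `∫_I ∫_0^{|I|} χ_{A(f,ε)}(x,h) dh dx / h` for the interval `I = (a,b)`. -/
def Cquant (f : ℝ → ℝ) (ε a b : ℝ) : ℝ≥0∞ :=
  ∫⁻ x in Set.Ioo a b, ∫⁻ h in Set.Ioo 0 (b - a),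
    (Aset f ε).indicator (fun _ => (1:ℝ≥0∞)) (x, h) / ENNReal.ofReal h

/-- `C(f,ε) = sup_I (1/|I|) ∫_I ∫_0^{|I|} χ_{A(f,ε)} dh dx/h < ∞`. -/
def CFinite (f : ℝ → ℝ) (ε : ℝ) : Prop :=
  ∃ K : ℝ, ∀ a b : ℝ, a < b → Cquant f ε a b ≤ ENNReal.ofReal (K * (b - a))

/-- `dist(f, I(BMO)) = inf {‖f - g‖_* : g ∈ I(BMO)}`. -/
def distIBMO (f : ℝ → ℝ) : ℝ :=
  sInf {r | ∃ g, MemIBMO g ∧ r = zygNorm (fun x => f x - g x)}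

set_option maxHeartbeats 1000000 in
/-- Estimate (2.4): for `h' > h > 0`,
`|Δ₂f(x,h') - Δ₂f(x,h)| ≤ C‖f‖_* ((h'-h)/h')(1 + log(h'/(h'-h)))`. -/
theorem stmt8 : ∃ C > (0:ℝ), ∀ f : ℝ → ℝ, MemZygmund f →
    ∀ x h h' : ℝ, 0 < h → h < h' →
    |delta2 f x h' - delta2 f x h| ≤ C * zygNorm f *
      (((h' - h) / h') * (1 + Real.log (h' / (h' - h)))) := by
  classical
  refine ⟨6, by norm_num, ?_⟩
  rintro f ⟨hcont, M₀, hM₀⟩ x h h' hh hhh'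
  have hmem : (max M₀ 0) ∈ {K : ℝ | 0 ≤ K ∧ ZygBound f K} :=
    ⟨le_max_right _ _, fun y k hk => (hM₀ y k hk).trans (le_max_left _ _)⟩
  have hMnn : 0 ≤ zygNorm f := le_csInf ⟨_, hmem⟩ fun b hb => hb.1
  have hZ : ZygBound f (zygNorm f) := fun y k hk =>
    le_csInf ⟨_, hmem⟩ fun b hb => hb.2 y k hk
  set M := zygNorm f with hMdef
  -- pointwise bound on second differences
  have hD : ∀ y k : ℝ, 0 < k → |f (y + k) - 2 * f y + f (y - k)| ≤ M * k := by
    intro y k hk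
    have h1 := hZ y k hk
    rw [delta2, abs_div, abs_of_pos hk, div_le_iff₀ hk] at h1
    linarith [h1]
  set g : ℝ → ℝ := fun u => f (x + u) + f (x - u) - 2 * f x with hg
  have hg1 : ∀ u : ℝ, 0 < u → |g u| ≤ M * u := by
    intro u hu
    have h1 := hD x u hu
    have e : g u = f (x + u) - 2 * f x + f (x - u) := by simp only [hg]; ring
    rw [e]; exact h1
  have hg2 : ∀ t v : ℝ, 0 < v → |g (t + v) + g (t - v) - 2 * g t| ≤ 2 * (M * v) := by
    intro t v hv
    have h1 := hD (x + t) v hv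
    have h2 := hD (x - t) v hv
    have e : g (t + v) + g (t - v) - 2 * g t =
        (f (x + t + v) - 2 * f (x + t) + f (x + t - v)) +
        (f (x - t + v) - 2 * f (x - t) + f (x - t - v)) := by
      simp only [hg]; ring_nf
    rw [e]
    calc |(f (x + t + v) - 2 * f (x + t) + f (x + t - v)) +
          (f (x - t + v) - 2 * f (x - t) + f (x - t - v))|
        ≤ |f (x + t + v) - 2 * f (x + t) + f (x + t - v)| +
          |f (x - t + v) - 2 * f (x - t) + f (x - t - v)| := abs_add_le _ _
      _ ≤ M * v + M * v := add_le_add h1 h2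
      _ = 2 * (M * v) := by ring
  have hdouble : ∀ t v : ℝ, 0 < v →
      2 * |g (t + v) - g t| ≤ |g (t + 2 * v) - g t| + 2 * (M * v) := by
    intro t v hv
    have h2 := hg2 (t + v) v hv
    have e : g (t + v + v) + g (t + v - v) - 2 * g (t + v) =
        (g (t + 2 * v) - g t) - 2 * (g (t + v) - g t) := by
      have e1 : t + v + v = t + 2 * v := by ring
      have e2 : t + v - v = t := by ring
      rw [e1, e2]; ring
    rw [e] at h2
    have t1 : |2 * (g (t + v) - g t)| - |g (t + 2 * v) - g t| ≤
        |2 * (g (t + v) - g t) - (g (t + 2 * v) - g t)| := abs_sub_abs_le_abs_sub _ _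
    have t2 : |2 * (g (t + v) - g t) - (g (t + 2 * v) - g t)| =
        |(g (t + 2 * v) - g t) - 2 * (g (t + v) - g t)| := abs_sub_comm _ _
    have t3 : |2 * (g (t + v) - g t)| = 2 * |g (t + v) - g t| := by
      rw [abs_mul, abs_two]
    linarith
  -- iterated doubling
  have hiter : ∀ n : ℕ, ∀ t v : ℝ, 0 < v →
      |g (t + v) - g t| ≤ |g (t + 2 ^ n * v) - g t| / 2 ^ n + n * (M * v) := by
    intro n
    induction n with
    | zero => intro t v hv; simp
    | succ m ih =>
      intro t v hv
      have hd := hdouble t v hv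
      have ihh := ih t (2 * v) (by linarith)
      have e : t + 2 ^ m * (2 * v) = t + 2 ^ (m + 1) * v := by ring
      rw [e] at ihh
      have h2m : (0 : ℝ) < 2 ^ m := by positivity
      have hc : |g (t + 2 ^ (m + 1) * v) - g t| / 2 ^ (m + 1) =
          |g (t + 2 ^ (m + 1) * v) - g t| / 2 ^ m / 2 := by
        rw [pow_succ, ← div_div]
      push_cast
      linarith
  set d := h' - h with hdd
  have hd0 : 0 < d := by simp only [hdd]; linarith
  have hdh' : d < h' := by simp only [hdd]; linarith
  have hh' : (0 : ℝ) < h' := lt_trans hh hhh'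
  -- find minimal n with h' ≤ 2^n * d
  have hex : ∃ n : ℕ, h' ≤ 2 ^ n * d := by
    obtain ⟨n, hn⟩ := exists_nat_gt (h' / d)
    refine ⟨n, ?_⟩
    have hcast : (n : ℝ) ≤ 2 ^ n := by
      exact_mod_cast (Nat.lt_two_pow_self (n := n)).le
    have : h' / d < 2 ^ n := lt_of_lt_of_le hn hcast
    exact ((div_lt_iff₀ hd0).mp this).le
  set n := Nat.find hex with hndef
  have hn : h' ≤ 2 ^ n * d := Nat.find_spec hex
  have hn0 : n ≠ 0 := by
    intro h0
    rw [h0] at hn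
    simp at hn
    linarith
  obtain ⟨m, hm1⟩ := Nat.exists_eq_succ_of_ne_zero hn0
  have hmlt : 2 ^ m * d < h' := by
    have := Nat.find_min hex (m := m) (by omega)
    push_neg at this
    exact this
  -- bound on m
  have hLpos : 0 < Real.log (h' / d) :=
    Real.log_pos ((one_lt_div hd0).mpr hdh')
  have hmbound : (m : ℝ) ≤ 2 * Real.log (h' / d) := by
    have h1 : (2 : ℝ) ^ m < h' / d := (lt_div_iff₀ hd0).mpr hmlt
    have h2 : Real.log ((2 : ℝ) ^ m) ≤ Real.log (h' / d) :=
      Real.log_le_log (by positivity) h1.le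
    rw [Real.log_pow] at h2
    have hlog2 : (1 / 2 : ℝ) ≤ Real.log 2 := by
      have := Real.log_two_gt_d9; linarith
    have hmnn : (0 : ℝ) ≤ (m : ℝ) := Nat.cast_nonneg m
    nlinarith
  -- apply iteration with n = m+1, t = h, v = d
  have key := hiter (m + 1) h d hd0
  have ehd : h + d = h' := by simp only [hdd]; ring
  rw [ehd] at key
  have hnm : h' ≤ 2 ^ (m + 1) * d := by rw [hm1] at hn; exact_mod_cast hn
  have h2m1 : (0 : ℝ) < 2 ^ (m + 1) := by positivity
  -- bound the top term
  have hu : 0 < h + 2 ^ (m + 1) * d := by nlinarith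
  have hterm : |g (h + 2 ^ (m + 1) * d) - g h| ≤ 3 * M * (2 ^ (m + 1) * d) := by
    have t1 : |g (h + 2 ^ (m + 1) * d) - g h| ≤ |g (h + 2 ^ (m + 1) * d)| + |g h| :=
      abs_sub _ _
    have t2 := hg1 (h + 2 ^ (m + 1) * d) hu
    have t3 := hg1 h hh
    have t4 : h ≤ 2 ^ (m + 1) * d := le_trans hhh'.le hnm
    nlinarith
  have hterm2 : |g (h + 2 ^ (m + 1) * d) - g h| / 2 ^ (m + 1) ≤ 3 * M * d := by
    rw [div_le_iff₀ h2m1]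
    calc |g (h + 2 ^ (m + 1) * d) - g h| ≤ 3 * M * (2 ^ (m + 1) * d) := hterm
      _ = 3 * M * d * 2 ^ (m + 1) := by ring
  -- conclude bound on |g h' - g h|
  have hgdiff : |g h' - g h| ≤ M * d * (4 + 2 * Real.log (h' / d)) := by
    have hcast : ((m + 1 : ℕ) : ℝ) = (m : ℝ) + 1 := by push_cast; ring
    rw [hcast] at key
    nlinarith [key, hterm2, mul_le_mul_of_nonneg_right hmbound (mul_nonneg hMnn hd0.le), mul_nonneg hMnn hd0.le]
  -- express difference of delta2's
  have ed : delta2 f x h' - delta2 f x h =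
      (g h' - g h) / h' - g h * (d / (h * h')) := by
    simp only [delta2, hg, hdd]
    field_simp
    ring
  have habs : |delta2 f x h' - delta2 f x h| ≤ |g h' - g h| / h' + M * h * (d / (h * h')) := by
    rw [ed]
    have t1 : |(g h' - g h) / h' - g h * (d / (h * h'))| ≤
        |(g h' - g h) / h'| + |g h * (d / (h * h'))| := abs_sub _ _
    have t2 : |(g h' - g h) / h'| = |g h' - g h| / h' := by
      rw [abs_div, abs_of_pos hh']
    have t3 : |g h * (d / (h * h'))| = |g h| * (d / (h * h')) := by
      rw [abs_mul, abs_of_pos (by positivity : (0:ℝ) < d / (h * h'))]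
    have t4 := hg1 h hh
    have t5 : (0:ℝ) ≤ d / (h * h') := by positivity
    linarith [t1, mul_le_mul_of_nonneg_right t4 t5]
  -- final combination
  have e1 : M * h * (d / (h * h')) = M * (d / h') := by
    field_simp
  have e2 : |g h' - g h| / h' ≤ M * (d / h') * (4 + 2 * Real.log (h' / d)) := by
    rw [div_le_iff₀ hh']
    calc |g h' - g h| ≤ M * d * (4 + 2 * Real.log (h' / d)) := hgdiff
      _ = M * (d / h') * (4 + 2 * Real.log (h' / d)) * h' := by field_simp
  have hdh'pos : 0 < d / h' := by positivity
  calc |delta2 f x h' - delta2 f x h|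
      ≤ |g h' - g h| / h' + M * h * (d / (h * h')) := habs
    _ ≤ M * (d / h') * (4 + 2 * Real.log (h' / d)) + M * (d / h') := by
        rw [e1]; linarith [e2]
    _ = M * ((d / h') * (5 + 2 * Real.log (h' / d))) := by ring
    _ ≤ 6 * M * ((d / h') * (1 + Real.log (h' / d))) := by
        nlinarith [mul_nonneg hMnn hdh'pos.le, hLpos, mul_nonneg hMnn hLpos.le,
          mul_nonneg (mul_nonneg hMnn hdh'pos.le) hLpos.le]
    _ = 6 * zygNorm f * (((h' - h) / h') * (1 + Real.log (h' / (h' - h)))) := by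
        rw [← hdd, ← hMdef]
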